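/- Let D ⊆ ℝ^d be open, let f : D → ℝ be locally Lipschitz continuous, and suppose f admits an ECL (L, F, G, Φ). If x ∈ D is non-degenerate and is not a global minimizer of f on D, then there exists a nonzero direction v ∈ ℝ^d, v ≠ 0, such that limsup_{t → 0⁺} (f(x + t·v) − f(x))/t < 0. -/

import Mathlib

open Set Filter Topology

/-- An Extended Convex Lifting (ECL) of a function `f : D → ℝ` with `D ⊆ ℝ^d`. -/
structure ECL (d dξ d₁ d₂ : ℕ) (D : Set (Fin d → ℝ)) (f : (Fin d → ℝ) → ℝ) where
  L : Set ((Fin d → ℝ) × ℝ × (Fin dξ → ℝ))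
  F : Set (ℝ × (Fin d₁ → ℝ))
  G : Set (Fin d₂ → ℝ)
  Φ : ((Fin d → ℝ) × ℝ × (Fin dξ → ℝ)) → (ℝ × (Fin d₁ → ℝ)) × (Fin d₂ → ℝ)
  convex_F : Convex ℝ F
  nonempty_G : G.Nonempty
  maps_Φ : ∀ p ∈ L, Φ p ∈ F ×ˢ G
  injOn_Φ : Set.InjOn Φ L
  surjOn_Φ : F ×ˢ G ⊆ Φ '' L
  inv_C2 : ∃ (U : Set ((ℝ × (Fin d₁ → ℝ)) × (Fin d₂ → ℝ)))
      (Ψ : ((ℝ × (Fin d₁ → ℝ)) × (Fin d₂ → ℝ)) → ((Fin d → ℝ) × ℝ × (Fin dξ → ℝ))),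
      IsOpen U ∧ F ×ˢ G ⊆ U ∧ ContDiffOn ℝ 2 Ψ U ∧ ∀ p ∈ L, Ψ (Φ p) = p
  proj_lower : ∀ x ∈ D, ∀ γ : ℝ, f x < γ → ∃ ξ, (x, γ, ξ) ∈ L
  proj_upper : ∀ x γ ξ, (x, γ, ξ) ∈ L →
      (x, γ) ∈ closure {q : (Fin d → ℝ) × ℝ | q.1 ∈ D ∧ f q.1 ≤ q.2}
  fst_Φ : ∀ p ∈ L, (Φ p).1.1 = p.2.1

set_option maxHeartbeats 1000000

/-- **ECL descent direction on open domains** (Lemma 3.1, part 1): if `D` is open,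
`f : D → ℝ` is locally Lipschitz and admits an ECL, and `x ∈ D` is non-degenerate
but not a global minimizer of `f` on `D`, then there is a nonzero direction `v`
along which the one-sided limsup difference quotient of `f` at `x` is negative. -/
theorem ecl_descent_direction_open {d dξ d₁ d₂ : ℕ} {D : Set (Fin d → ℝ)}
    {f : (Fin d → ℝ) → ℝ} (hD : IsOpen D)
    (hf : ∀ x ∈ D, ∃ (K : NNReal) (ε : ℝ), 0 < ε ∧
      LipschitzOnWith K f (Metric.ball x ε ∩ D))
    (E : ECL d dξ d₁ d₂ D f)
    {x : Fin d → ℝ} (hx : x ∈ D)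
    (hnd : ∃ ξ, (x, f x, ξ) ∈ E.L)
    (hnotmin : ∃ x' ∈ D, f x' < f x) :
    ∃ v : Fin d → ℝ, v ≠ 0 ∧
      Filter.limsup (fun t : ℝ => (((f (x + t • v) - f x) / t : ℝ) : EReal))
        (𝓝[>] (0 : ℝ)) < 0 := by
  classical
  -- closure fact
  have hcl : ∀ y ∈ D, ∀ γ : ℝ,
      (y, γ) ∈ closure {q : (Fin d → ℝ) × ℝ | q.1 ∈ D ∧ f q.1 ≤ q.2} → f y ≤ γ := by
    intro y hyD γ hclos
    obtain ⟨K, ε, hε, hlip⟩ := hf y hyD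
    set S := {q : (Fin d → ℝ) × ℝ | q.1 ∈ D ∧ f q.1 ≤ q.2}
    have hne : (𝓝[S] (y, γ)).NeBot := mem_closure_iff_nhdsWithin_neBot.mp hclos
    have hcont : ContinuousWithinAt f (Metric.ball y ε ∩ D) y :=
      hlip.continuousOn.continuousWithinAt ⟨Metric.mem_ball_self hε, hyD⟩
    have hfst : Tendsto (fun q : (Fin d → ℝ) × ℝ => q.1) (𝓝[S] (y, γ))
        (𝓝[Metric.ball y ε ∩ D] y) := by
      rw [tendsto_nhdsWithin_iff]
      have htend : Tendsto (fun q : (Fin d → ℝ) × ℝ => q.1) (𝓝[S] (y, γ)) (𝓝 y) :=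
        (continuous_fst.tendsto _).mono_left nhdsWithin_le_nhds
      refine ⟨htend, ?_⟩
      filter_upwards [self_mem_nhdsWithin (s := S),
        htend (Metric.ball_mem_nhds y hε)] with q hq1 hq2
      exact ⟨hq2, hq1.1⟩
    have h1 : Tendsto (fun q : (Fin d → ℝ) × ℝ => f q.1) (𝓝[S] (y, γ)) (𝓝 (f y)) :=
      hcont.tendsto.comp hfst
    have h2 : Tendsto (fun q : (Fin d → ℝ) × ℝ => q.2) (𝓝[S] (y, γ)) (𝓝 γ) :=
      (continuous_snd.tendsto _).mono_left nhdsWithin_le_nhds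
    exact le_of_tendsto_of_tendsto h1 h2 (eventually_mem_nhdsWithin.mono fun q hq => hq.2)
  obtain ⟨ξ₀, hξ₀⟩ := hnd
  obtain ⟨x', hx'D, hx'f⟩ := hnotmin
  set γ' : ℝ := (f x' + f x) / 2 with hγ'def
  have hγ'₁ : f x' < γ' := by rw [hγ'def]; linarith
  have hγ'₂ : γ' < f x := by rw [hγ'def]; linarith
  set δ : ℝ := f x - γ' with hδdef
  have hδ : 0 < δ := by rw [hδdef]; linarith
  obtain ⟨ξ', hξ'⟩ := E.proj_lower x' hx'D γ' hγ'₁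
  set a := E.Φ (x, f x, ξ₀) with hadef
  have ha : a ∈ E.F ×ˢ E.G := E.maps_Φ _ hξ₀
  have ha1 : a.1.1 = f x := E.fst_Φ _ hξ₀
  set b := E.Φ (x', γ', ξ') with hbdef
  have hb : b ∈ E.F ×ˢ E.G := E.maps_Φ _ hξ'
  have hb1 : b.1.1 = γ' := E.fst_Φ _ hξ'
  obtain ⟨U, Ψ, hUopen, hFGU, hΨC2, hΨinv⟩ := E.inv_C2
  set q : ℝ → (ℝ × (Fin d₁ → ℝ)) × (Fin d₂ → ℝ) :=
    fun s => (a.1 + s • (b.1 - a.1), a.2) with hqdef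
  have hq0 : q 0 = a := by simp [hqdef]
  have hqmem : ∀ s ∈ Icc (0:ℝ) 1, q s ∈ E.F ×ˢ E.G := by
    intro s hs
    refine ⟨?_, ha.2⟩
    have := E.convex_F ha.1 hb.1 (by linarith [hs.1, hs.2] : (0:ℝ) ≤ 1 - s) hs.1 (by ring)
    convert this using 1
    simp only [hqdef]
    module
  have hc : ∀ s ∈ Icc (0:ℝ) 1, Ψ (q s) ∈ E.L ∧ E.Φ (Ψ (q s)) = q s := by
    intro s hs
    obtain ⟨p, hpL, hpΦ⟩ := E.surjOn_Φ (hqmem s hs)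
    have : Ψ (q s) = p := by rw [← hpΦ, hΨinv p hpL]
    rw [this, hpΦ]; exact ⟨hpL, rfl⟩
  have hγc : ∀ s ∈ Icc (0:ℝ) 1, (Ψ (q s)).2.1 = f x - s * δ := by
    intro s hs
    have h1 : (E.Φ (Ψ (q s))).1.1 = (Ψ (q s)).2.1 := E.fst_Φ _ (hc s hs).1
    rw [(hc s hs).2] at h1
    rw [← h1]
    simp only [hqdef, Prod.fst_add, Prod.smul_fst, Prod.fst_sub, smul_eq_mul]
    rw [ha1, hb1, hδdef]; ring
  -- c 0 = (x, f x, ξ₀)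
  have hΨ0 : Ψ (q 0) = (x, f x, ξ₀) := by rw [hq0, hadef, hΨinv _ hξ₀]
  -- differentiability
  have haU : a ∈ U := hFGU ha
  have hΨdiff : DifferentiableAt ℝ Ψ a :=
    (hΨC2.differentiableOn two_ne_zero).differentiableAt (hUopen.mem_nhds haU)
  have hqderiv : HasDerivAt q (b.1 - a.1, 0) 0 := by
    have h1 : HasDerivAt (fun s : ℝ => a.1 + s • (b.1 - a.1)) (b.1 - a.1) 0 := by
      simpa using ((hasDerivAt_id (0:ℝ)).smul_const (b.1 - a.1)).const_add a.1
    exact h1.prodMk (hasDerivAt_const 0 a.2)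
  have hcderiv : HasDerivAt (fun s => Ψ (q s)) (fderiv ℝ Ψ a (b.1 - a.1, 0)) 0 := by
    have hF : HasFDerivAt Ψ (fderiv ℝ Ψ a) (q 0) := by rw [hq0]; exact hΨdiff.hasFDerivAt
    exact hF.comp_hasDerivAt 0 hqderiv
  set v : Fin d → ℝ := (fderiv ℝ Ψ a (b.1 - a.1, 0)).1 with hvdef
  have hc₁deriv : HasDerivAt (fun s => (Ψ (q s)).1) v 0 := hcderiv.fst
  have hc₁0 : (Ψ (q 0)).1 = x := by rw [hΨ0]
  -- Lipschitz data at x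
  obtain ⟨K, ε, hε, hlip⟩ := hf x hx
  set ε' : ℝ := δ / (2 * (K + 1)) with hε'def
  have hKpos : (0:ℝ) < K + 1 := by positivity
  have hε'pos : 0 < ε' := by rw [hε'def]; positivity
  have hKε' : (K:ℝ) * ε' ≤ δ / 2 := by
    rw [hε'def, mul_div_assoc', div_le_div_iff₀ (by positivity) (by norm_num)]
    nlinarith [K.coe_nonneg]
  clear_value ε' δ γ'
  -- little-o bound
  have hlo : (fun s : ℝ => (Ψ (q s)).1 - x - s • v) =o[𝓝 0] fun s => s := by
    have := hasDerivAt_iff_isLittleO.mp hc₁deriv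
    simpa [hc₁0] using this
  have hbound : ∀ᶠ s in 𝓝 (0:ℝ), ‖(Ψ (q s)).1 - x - s • v‖ ≤ ε' * ‖s‖ :=
    hlo.def hε'pos
  -- eventual facts on 𝓝[>] 0
  have hIoo : ∀ᶠ s in 𝓝[>] (0:ℝ), s ∈ Ioo (0:ℝ) 1 :=
    Ioo_mem_nhdsGT_of_mem ⟨le_refl 0, one_pos⟩
  have hcont₁ : ContinuousAt (fun s => (Ψ (q s)).1) 0 := hc₁deriv.continuousAt
  have hmem₁ : ∀ᶠ s in 𝓝 (0:ℝ), (Ψ (q s)).1 ∈ Metric.ball x ε ∩ D := by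
    have hopen : IsOpen (Metric.ball x ε ∩ D) := Metric.isOpen_ball.inter hD
    have hxmem : (Ψ (q 0)).1 ∈ Metric.ball x ε ∩ D := by
      rw [hc₁0]; exact ⟨Metric.mem_ball_self hε, hx⟩
    exact hcont₁ (hopen.mem_nhds hxmem)
  have hmem₂ : ∀ᶠ s in 𝓝 (0:ℝ), x + s • v ∈ Metric.ball x ε ∩ D := by
    have hcont₂ : ContinuousAt (fun s : ℝ => x + s • v) 0 := by fun_prop
    have hopen : IsOpen (Metric.ball x ε ∩ D) := Metric.isOpen_ball.inter hD
    have : x + (0:ℝ) • v ∈ Metric.ball x ε ∩ D := by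
      simp [Metric.mem_ball_self hε, hx]
    exact hcont₂ (hopen.mem_nhds this)
  have hkey : ∀ᶠ s in 𝓝[>] (0:ℝ),
      f ((Ψ (q s)).1) ≤ f x - s * δ ∧ (Ψ (q s)).1 ∈ Metric.ball x ε ∩ D ∧
      x + s • v ∈ Metric.ball x ε ∩ D ∧ ‖(Ψ (q s)).1 - x - s • v‖ ≤ ε' * s ∧
      0 < s := by
    filter_upwards [hIoo, nhdsWithin_le_nhds hmem₁, nhdsWithin_le_nhds hmem₂,
      nhdsWithin_le_nhds hbound] with s hs h1 h2 h3
    have hs01 : s ∈ Icc (0:ℝ) 1 := ⟨hs.1.le, hs.2.le⟩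
    refine ⟨?_, h1, h2, by simpa [abs_of_pos hs.1] using h3, hs.1⟩
    -- f (c₁ s) ≤ f x - s δ
    have hL := (hc s hs01).1
    have hup := E.proj_upper (Ψ (q s)).1 (Ψ (q s)).2.1 (Ψ (q s)).2.2 (by simpa using hL)
    rw [hγc s hs01] at hup
    exact hcl _ h1.2 _ hup
  -- v ≠ 0
  have hvne : v ≠ 0 := by
    intro hv0
    obtain ⟨s, h1, h2, _, h4, h5⟩ := hkey.exists
    rw [hv0, smul_zero, sub_zero] at h4
    have hd : dist (f ((Ψ (q s)).1)) (f x) ≤ K * dist ((Ψ (q s)).1) x :=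
      hlip.dist_le_mul _ h2 _ ⟨Metric.mem_ball_self hε, hx⟩
    rw [dist_eq_norm, dist_eq_norm] at hd
    have : f x - f ((Ψ (q s)).1) ≤ K * (ε' * s) := by
      calc f x - f ((Ψ (q s)).1) ≤ |f ((Ψ (q s)).1) - f x| := by
            rw [abs_sub_comm]; exact le_abs_self _
        _ ≤ K * ‖(Ψ (q s)).1 - x‖ := hd
        _ ≤ K * (ε' * s) := by
            exact mul_le_mul_of_nonneg_left h4 K.coe_nonneg
    have h6 : s * δ ≤ K * ε' * s := by nlinarith
    have h7 : (K:ℝ) * ε' ≤ δ / 2 := hKε'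
    nlinarith
  refine ⟨v, hvne, ?_⟩
  -- limsup bound
  have hev : ∀ᶠ s in 𝓝[>] (0:ℝ),
      (((f (x + s • v) - f x) / s : ℝ) : EReal) ≤ ((-δ / 2 : ℝ) : EReal) := by
    filter_upwards [hkey] with s ⟨h1, h2, h3, h4, h5⟩
    have hd : dist (f (x + s • v)) (f ((Ψ (q s)).1)) ≤ K * dist (x + s • v) ((Ψ (q s)).1) :=
      hlip.dist_le_mul _ h3 _ h2
    rw [dist_eq_norm, dist_eq_norm] at hd
    have hnorm : ‖x + s • v - (Ψ (q s)).1‖ = ‖(Ψ (q s)).1 - x - s • v‖ := by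
      rw [← norm_neg]; congr 1; abel
    have hfle : f (x + s • v) ≤ f x - s * δ + K * (ε' * s) := by
      have : f (x + s • v) - f ((Ψ (q s)).1) ≤ K * (ε' * s) := by
        calc f (x + s • v) - f ((Ψ (q s)).1) ≤ |f (x + s • v) - f ((Ψ (q s)).1)| :=
              le_abs_self _
          _ ≤ K * ‖x + s • v - (Ψ (q s)).1‖ := hd
          _ ≤ K * (ε' * s) := by
              rw [hnorm]; exact mul_le_mul_of_nonneg_left h4 K.coe_nonneg
      linarith
    have hq : (f (x + s • v) - f x) / s ≤ -δ / 2 := by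
      rw [div_le_iff₀ h5]
      have hmul : (K:ℝ) * ε' * s ≤ δ / 2 * s := mul_le_mul_of_nonneg_right hKε' h5.le
      have hring : (K:ℝ) * (ε' * s) = (K:ℝ) * ε' * s := by ring
      have hring2 : -(s * δ) + δ / 2 * s = -δ / 2 * s := by ring
      linarith
    exact EReal.coe_le_coe_iff.mpr hq
  have hlimsup : Filter.limsup (fun t : ℝ => (((f (x + t • v) - f x) / t : ℝ) : EReal))
      (𝓝[>] (0:ℝ)) ≤ ((-δ / 2 : ℝ) : EReal) :=
    Filter.limsup_le_of_le (by isBoundedDefault) hev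
  refine lt_of_le_of_lt hlimsup ?_
  have : ((-δ / 2 : ℝ) : EReal) < ((0:ℝ) : EReal) := by
    exact_mod_cast (by linarith : -δ/2 < (0:ℝ))
  simpa using this
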